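/- For finite binary sequences s and t such that t.x_s is defined (i.e., t has a prefix in the domain tree of x_s), the relation y_t ∘ x_s = x_s ∘ y_{t.x_s} holds as maps on 2^ℕ. -/

import Mathlib

/-- The localization of a map `f` of `2^ℕ` at a finite binary sequence `s`. -/
def loc (s : List Bool) (f : Stream' Bool → Stream' Bool) (ξ : Stream' Bool) : Stream' Bool :=
  if Stream'.take s.length ξ = s then
    Stream'.appendStream' s (f (Stream'.drop s.length ξ))
  else ξ

private lemma take_append' (l : List Bool) (η : Stream' Bool) :
    Stream'.take l.length (Stream'.appendStream' l η) = l := by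
  induction l with
  | nil => rfl
  | cons a l ih =>
    simp [Stream'.cons_append_stream, Stream'.take_succ, Stream'.head_cons,
      Stream'.tail_cons, ih]

private lemma drop_append' (l : List Bool) (η : Stream' Bool) :
    Stream'.drop l.length (Stream'.appendStream' l η) = η := by
  induction l with
  | nil => rfl
  | cons a l ih =>
    rw [Stream'.cons_append_stream, List.length_cons, Stream'.drop_succ,
      Stream'.tail_cons, ih]

private lemma append_cancel' (l : List Bool) {a b : Stream' Bool}
    (h : Stream'.appendStream' l a = Stream'.appendStream' l b) : a = b := by
  induction l with
  | nil => exact h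
  | cons c l ih =>
    apply ih
    have := congrArg Stream'.tail h
    simpa [Stream'.cons_append_stream, Stream'.tail_cons] using this

private lemma shape' (a : Stream' Bool) :
    (∃ η, a = Stream'.cons false (Stream'.cons false η)) ∨
    (∃ η, a = Stream'.cons false (Stream'.cons true η)) ∨
    (∃ η, a = Stream'.cons true η) := by
  have ha : a = Stream'.cons a.head (Stream'.cons a.tail.head a.tail.tail) := by
    rw [Stream'.eta, Stream'.eta]
  have ha1 : a = Stream'.cons a.head a.tail := (Stream'.eta a).symm
  cases h1 : a.head with
  | true => exact Or.inr (Or.inr ⟨a.tail, by rw [h1] at ha1; exact ha1⟩)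
  | false =>
    cases h2 : a.tail.head with
    | false => exact Or.inl ⟨a.tail.tail, by rw [h1, h2] at ha; exact ha⟩
    | true => exact Or.inr (Or.inl ⟨a.tail.tail, by rw [h1, h2] at ha; exact ha⟩)

private lemma x_inj' (x : Stream' Bool → Stream' Bool)
    (hx00 : ∀ η, x (Stream'.cons false (Stream'.cons false η)) = Stream'.cons false η)
    (hx01 : ∀ η, x (Stream'.cons false (Stream'.cons true η)) =
      Stream'.cons true (Stream'.cons false η))
    (hx1 : ∀ η, x (Stream'.cons true η) = Stream'.cons true (Stream'.cons true η)) :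
    Function.Injective x := by
  classical
  set g : Stream' Bool → Stream' Bool := fun ξ =>
    if ξ.head then
      (if ξ.tail.head then Stream'.cons true ξ.tail.tail
       else Stream'.cons false (Stream'.cons true ξ.tail.tail))
    else Stream'.cons false (Stream'.cons false ξ.tail) with hg
  have key : ∀ a, g (x a) = a := by
    intro a
    rcases shape' a with ⟨η, rfl⟩ | ⟨η, rfl⟩ | ⟨η, rfl⟩ <;>
      simp [hg, hx00, hx01, hx1, Stream'.head_cons, Stream'.tail_cons]
  intro a b h
  rw [← key a, ← key b, h]

private lemma loc_inj' (s : List Bool) (f : Stream' Bool → Stream' Bool)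
    (hf : Function.Injective f) : Function.Injective (loc s f) := by
  intro a b h
  unfold loc at h
  by_cases ha : Stream'.take s.length a = s <;>
    by_cases hb : Stream'.take s.length b = s <;> simp [ha, hb] at h
  · have h2 := hf h
    rw [← Stream'.append_take_drop s.length a, ← Stream'.append_take_drop s.length b,
      ha, hb, h2]
  · exact absurd (by rw [← h, take_append']) hb
  · exact absurd (by rw [h, take_append']) ha
  · exact h

/-- if `t.x_s` is defined (and equals the finite sequence `u`, i.e.
`x_s` maps the cone above `t` onto the cone above `u` by changing only the prefix),
then `y_t · x_s = x_s · y_{t.x_s}` (left-to-right composition). -/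
theorem y_x_conjugation_relation
    (x y z : Stream' Bool → Stream' Bool)
    (hx00 : ∀ η, x (Stream'.cons false (Stream'.cons false η)) = Stream'.cons false η)
    (hx01 : ∀ η, x (Stream'.cons false (Stream'.cons true η)) =
      Stream'.cons true (Stream'.cons false η))
    (hx1 : ∀ η, x (Stream'.cons true η) =
      Stream'.cons true (Stream'.cons true η))
    (hy00 : ∀ η, y (Stream'.cons false (Stream'.cons false η)) =
      Stream'.cons false (y η))
    (hy01 : ∀ η, y (Stream'.cons false (Stream'.cons true η)) =
      Stream'.cons true (Stream'.cons false (z η)))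
    (hy1 : ∀ η, y (Stream'.cons true η) =
      Stream'.cons true (Stream'.cons true (y η)))
    (hz0 : ∀ η, z (Stream'.cons false η) =
      Stream'.cons false (Stream'.cons false (z η)))
    (hz10 : ∀ η, z (Stream'.cons true (Stream'.cons false η)) =
      Stream'.cons false (Stream'.cons true (y η)))
    (hz11 : ∀ η, z (Stream'.cons true (Stream'.cons true η)) =
      Stream'.cons true (z η))
    (s t u : List Bool)
    (htu : ∀ η : Stream' Bool,
      loc s x (Stream'.appendStream' t η) = Stream'.appendStream' u η) :
    ∀ ξ : Stream' Bool, loc s x (loc t y ξ) = loc u y (loc s x ξ) := by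
  have hxinj : Function.Injective (loc s x) :=
    loc_inj' s x (x_inj' x hx00 hx01 hx1)
  intro ξ
  by_cases ht : Stream'.take t.length ξ = t
  · have hξ : ξ = Stream'.appendStream' t (Stream'.drop t.length ξ) := by
      conv_lhs => rw [← Stream'.append_take_drop t.length ξ, ht]
    have h1 : loc t y ξ = Stream'.appendStream' t (y (Stream'.drop t.length ξ)) := by
      simp [loc, ht]
    rw [h1, htu]
    conv_rhs => rw [hξ]
    rw [htu]
    simp [loc, take_append', drop_append']
  · have hu : Stream'.take u.length (loc s x ξ) ≠ u := by
      intro hcon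
      have h1 : loc s x ξ =
          Stream'.appendStream' u (Stream'.drop u.length (loc s x ξ)) := by
        conv_lhs => rw [← Stream'.append_take_drop u.length (loc s x ξ), hcon]
      rw [← htu] at h1
      exact ht (by rw [hxinj h1, take_append'])
    have h2 : loc t y ξ = ξ := if_neg ht
    have h3 : loc u y (loc s x ξ) = loc s x ξ := if_neg hu
    rw [h2, h3]
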